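/- If G is a square-stable graph and v is a simplicial vertex of G, then v belongs to some maximum stable set of G². -/

import Mathlib

open SimpleGraph

/-- The square of a graph: vertices adjacent iff at distance 1 or 2 in `G`. -/
def SimpleGraph.sq {V : Type*} (G : SimpleGraph V) : SimpleGraph V where
  Adj u v := G.Adj u v ∨ (u ≠ v ∧ ∃ w, G.Adj u w ∧ G.Adj w v)
  symm := by
    constructor
    rintro u v (h | ⟨hne, w, h1, h2⟩)
    · exact Or.inl h.symm
    · exact Or.inr ⟨hne.symm, w, h2.symm, h1.symm⟩
  loopless := by
    constructor
    rintro u (h | ⟨hne, _⟩)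
    · exact G.irrefl h
    · exact hne rfl

/-- A stable (independent) set of vertices. -/
def SimpleGraph.IsStableSet {V : Type*} (G : SimpleGraph V) (s : Set V) : Prop :=
  s.Pairwise fun u v => ¬ G.Adj u v

/-- The stability (independence) number. -/
noncomputable def SimpleGraph.alpha {V : Type*} (G : SimpleGraph V) : ℕ :=
  sSup {n | ∃ s : Finset V, G.IsStableSet ↑s ∧ s.card = n}

/-- The matching number: maximum number of edges in a matching. -/
noncomputable def SimpleGraph.mu {V : Type*} (G : SimpleGraph V) : ℕ :=
  sSup {n | ∃ M : G.Subgraph, M.IsMatching ∧ M.edgeSet.ncard = n}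

/-- `s` is a maximum stable set. -/
def SimpleGraph.IsMaximumStable {V : Type*} (G : SimpleGraph V) (s : Finset V) : Prop :=
  G.IsStableSet ↑s ∧ s.card = G.alpha

/-- `s` is a maximal stable set. -/
def SimpleGraph.IsMaximalStable {V : Type*} (G : SimpleGraph V) (s : Finset V) : Prop :=
  G.IsStableSet ↑s ∧ ∀ v ∉ s, ¬ G.IsStableSet (insert v (↑s : Set V))

/-- `G` is square-stable if `α(G) = α(G²)`. -/
def SimpleGraph.SquareStable {V : Type*} (G : SimpleGraph V) : Prop :=
  G.alpha = G.sq.alpha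

/-- König-Egerváry graph: `α(G) + μ(G) = |V(G)|`. -/
def SimpleGraph.KonigEgervary {V : Type*} [Fintype V] (G : SimpleGraph V) : Prop :=
  G.alpha + G.mu = Fintype.card V

/-- A pendant vertex: a vertex of degree 1. -/
def SimpleGraph.Pendant {V : Type*} (G : SimpleGraph V) (v : V) : Prop :=
  (G.neighborSet v).ncard = 1

/-- `G` has a perfect matching consisting of pendant edges. -/
def SimpleGraph.HasPendantPerfectMatching {V : Type*} (G : SimpleGraph V) : Prop :=
  ∃ M : G.Subgraph, M.IsPerfectMatching ∧ ∀ e ∈ M.edgeSet, ∃ v ∈ e, G.Pendant v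

/-- A simplicial vertex: its neighborhood induces a clique. -/
def SimpleGraph.IsSimplicial {V : Type*} (G : SimpleGraph V) (v : V) : Prop :=
  G.IsClique (G.neighborSet v)

/-- `G` is well-covered: every maximal stable set is maximum. -/
def SimpleGraph.WellCovered {V : Type*} (G : SimpleGraph V) : Prop :=
  ∀ s : Finset V, G.IsMaximalStable s → s.card = G.alpha

/-- `G` is very well-covered: well-covered, no isolated vertices, `|V| = 2α`. -/
def SimpleGraph.VeryWellCovered {V : Type*} [Fintype V] (G : SimpleGraph V) : Prop :=
  G.WellCovered ∧ (∀ v : V, (G.neighborSet v).ncard ≠ 0) ∧ Fintype.card V = 2 * G.alpha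

private lemma alpha_bdd {V : Type*} [Fintype V] (G : SimpleGraph V) :
    BddAbove {n | ∃ s : Finset V, G.IsStableSet ↑s ∧ s.card = n} := by
  refine ⟨Fintype.card V, ?_⟩
  rintro n ⟨s, -, rfl⟩
  simpa using s.card_le_univ

private lemma alpha_mem {V : Type*} [Fintype V] (G : SimpleGraph V) :
    ∃ s : Finset V, G.IsStableSet ↑s ∧ s.card = G.alpha := by
  have hne : {n | ∃ s : Finset V, G.IsStableSet ↑s ∧ s.card = n}.Nonempty :=
    ⟨0, ∅, by simp [SimpleGraph.IsStableSet], by simp⟩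
  exact Nat.sSup_mem hne (alpha_bdd G)

private lemma card_le_alpha {V : Type*} [Fintype V] (G : SimpleGraph V) (s : Finset V)
    (hs : G.IsStableSet ↑s) : s.card ≤ G.alpha :=
  le_csSup (alpha_bdd G) ⟨s, hs, rfl⟩

theorem stmt7 {V : Type*} [Fintype V] (G : SimpleGraph V) (hc : G.Connected)
    (hss : G.SquareStable) (v : V) (h : G.IsSimplicial v) :
    ∃ s : Finset V, G.sq.IsMaximumStable s ∧ v ∈ s := by
  classical
  obtain ⟨S, hSstab, hScard⟩ := alpha_mem G.sq
  by_cases hv : v ∈ S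
  · exact ⟨S, ⟨hSstab, hScard⟩, hv⟩
  -- S is stable in G
  have hSG : G.IsStableSet ↑S := fun a ha b hb hab hadj =>
    hSstab ha hb hab (Or.inl hadj)
  have hScardG : S.card = G.alpha := by rw [hScard, hss]
  -- there exists u ∈ S adjacent to v in G
  have hadjex : ∃ u ∈ S, G.Adj v u := by
    by_contra hno
    push_neg at hno
    have hstab : G.IsStableSet ↑(insert v S) := by
      intro a ha b hb hab
      simp only [Finset.coe_insert, Set.mem_insert_iff, Finset.mem_coe] at ha hb
      rcases ha with rfl | ha
      · rcases hb with rfl | hb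
        · exact absurd rfl hab
        · exact hno b hb
      · rcases hb with rfl | hb
        · exact fun hadj => hno a ha hadj.symm
        · exact hSG ha hb hab
    have hle : (insert v S).card ≤ G.alpha := card_le_alpha G _ hstab
    rw [Finset.card_insert_of_notMem hv, hScardG] at hle
    omega
  obtain ⟨u, huS, hvu⟩ := hadjex
  have key : ∀ u' ∈ S, u' ≠ u → ¬ G.sq.Adj v u' := by
    rintro u' hu' hne (h1 | ⟨-, w, hvw, hwu'⟩)
    · exact hSG huS hu' hne.symm (h hvu h1 hne.symm)
    · by_cases hwu : w = u
      · subst hwu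
        exact hSG huS hu' hne.symm hwu'
      · have huw : G.Adj u w := h hvu hvw (Ne.symm hwu)
        exact hSstab huS hu' hne.symm (Or.inr ⟨hne.symm, w, huw, hwu'⟩)
  refine ⟨insert v (S.erase u), ⟨?_, ?_⟩, Finset.mem_insert_self _ _⟩
  · intro a ha b hb hab
    simp only [Finset.coe_insert, Set.mem_insert_iff, Finset.mem_coe,
      Finset.mem_erase] at ha hb
    rcases ha with rfl | ⟨hau, haS⟩
    · rcases hb with rfl | ⟨hbu, hbS⟩
      · exact absurd rfl hab
      · exact key b hbS hbu
    · rcases hb with rfl | ⟨hbu, hbS⟩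
      · exact fun hadj => key a haS hau hadj.symm
      · exact hSstab haS hbS hab
  · have hvnot : v ∉ S.erase u := fun hmem => hv (Finset.mem_of_mem_erase hmem)
    rw [Finset.card_insert_of_notMem hvnot, Finset.card_erase_of_mem huS, ← hScard]
    have : 0 < S.card := Finset.card_pos.2 ⟨u, huS⟩
    omega
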